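/- Let d_{1,-1}, d_{-1,1}, d_{0,1} > 0 and d_{1,0} ≥ 0, and let S be the set of those steps v ∈ {(1,-1), (-1,1), (1,0), (0,1)} with d_v > 0 (this is the genus-zero step set 𝒮₁ if d_{1,0} = 0 and 𝒮₂ if d_{1,0} > 0). Let a, b > 0 satisfy a + b = ab. Then the specializations of the generating function of weighted quadrant walks with interacting boundaries are rational: in the ring of formal power series in t with coefficients in ℝ[x], (1 − ab·d_{1,-1}d_{-1,1}·t² − (a·d_{1,0}·t + ab·d_{1,-1}d_{0,1}·t²)·x) · Q(x,0) = 1 − ab·d_{1,-1}d_{-1,1}·t², and in the ring of formal power series in t with coefficients in ℝ[y], (1 − ab·d_{1,-1}d_{-1,1}·t² − (b·d_{0,1}·t + ab·d_{-1,1}d_{1,0}·t²)·y) · Q(0,y) = 1 − ab·d_{1,-1}d_{-1,1}·t². -/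

import Mathlib

/-!
Statement 0: For the genus-zero step sets 𝒮₁/𝒮₂ (steps among (1,-1), (-1,1), (1,0), (0,1))
with Boltzmann weights a, b > 0 satisfying a + b = ab, the specializations Q(x,0) and
Q(0,y) of the generating function of weighted quadrant walks with interacting
boundaries are rational, satisfying the stated linear identities of formal power
series in t with polynomial coefficients.
-/

open scoped Classical

noncomputable section

namespace Stmt0

/-- Position of the walk after steps `v 0, …, v i` (partial sum of the first `i+1` steps). -/
def psum {n : ℕ} (v : Fin n → ℤ × ℤ) (i : Fin n) : ℤ × ℤ :=
  ∑ j ∈ Finset.univ.filter (fun j => j ≤ i), v j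

/-- Quadrant walks of length `n` with all steps in `S`: every partial sum has
nonnegative coordinates. -/
def quadWalks (S : Finset (ℤ × ℤ)) (n : ℕ) : Finset (Fin n → ℤ × ℤ) :=
  (Fintype.piFinset fun _ => S).filter fun v =>
    ∀ i : Fin n, 0 ≤ (psum v i).1 ∧ 0 ≤ (psum v i).2

/-- The weight of a walk: the product of the step weights, times `a` to the number of
contacts with the x-axis, times `b` to the number of contacts with the y-axis. -/
def wt {n : ℕ} (d : ℤ × ℤ → ℝ) (a b : ℝ) (v : Fin n → ℤ × ℤ) : ℝ :=
  (∏ i, d (v i)) *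
    a ^ (Finset.univ.filter fun i => (psum v i).2 = 0).card *
    b ^ (Finset.univ.filter fun i => (psum v i).1 = 0).card

/-- Endpoint of a walk. -/
def endpt {n : ℕ} (v : Fin n → ℤ × ℤ) : ℤ × ℤ := ∑ j, v j

/-- `Q(x,0)`: generating function (in `t`, with coefficients in `ℝ[x]`) of weighted
quadrant walks ending on the x-axis, the exponent of `x` recording the abscissa of the
endpoint. -/
def Qx0 (S : Finset (ℤ × ℤ)) (d : ℤ × ℤ → ℝ) (a b : ℝ) : PowerSeries (Polynomial ℝ) :=
  PowerSeries.mk fun n =>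
    ∑ v ∈ (quadWalks S n).filter (fun v => (endpt v).2 = 0),
      Polynomial.C (wt d a b v) * Polynomial.X ^ (endpt v).1.toNat

/-- `Q(0,y)`: generating function of weighted quadrant walks ending on the y-axis. -/
def Qy0 (S : Finset (ℤ × ℤ)) (d : ℤ × ℤ → ℝ) (a b : ℝ) : PowerSeries (Polynomial ℝ) :=
  PowerSeries.mk fun n =>
    ∑ v ∈ (quadWalks S n).filter (fun v => (endpt v).1 = 0),
      Polynomial.C (wt d a b v) * Polynomial.X ^ (endpt v).2.toNat

/-- Constant (real) coefficient, viewed in `(ℝ[x])[[t]]`. -/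
abbrev CC (r : ℝ) : PowerSeries (Polynomial ℝ) := PowerSeries.C (Polynomial.C r)

/-- The catalytic variable `x` (or `y`), viewed in `(ℝ[x])[[t]]`. -/
abbrev XX : PowerSeries (Polynomial ℝ) := PowerSeries.C Polynomial.X

/-- The length variable `t`. -/
abbrev T : PowerSeries (Polynomial ℝ) := PowerSeries.X


/-- Abstract transfer recurrence for weighted quadrant walks. -/
def Cg (eE eN eSE eNW α β : ℝ) : ℕ → ℤ → ℤ → ℝ
  | 0, i, j => if i = 0 ∧ j = 0 then 1 else 0
  | n+1, i, j =>
    if 0 ≤ i ∧ 0 ≤ j then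
      (if j = 0 then α else 1) * (if i = 0 then β else 1) *
        (eE * Cg eE eN eSE eNW α β n (i-1) j + eN * Cg eE eN eSE eNW α β n i (j-1) +
         eSE * Cg eE eN eSE eNW α β n (i-1) (j+1) + eNW * Cg eE eN eSE eNW α β n (i+1) (j-1))
    else 0

variable {eE eN eSE eNW α β : ℝ}

lemma Cg_zero (i j : ℤ) : Cg eE eN eSE eNW α β 0 i j = if i = 0 ∧ j = 0 then 1 else 0 := rfl

lemma Cg_succ (n : ℕ) (i j : ℤ) : Cg eE eN eSE eNW α β (n+1) i j =
    if 0 ≤ i ∧ 0 ≤ j then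
      (if j = 0 then α else 1) * (if i = 0 then β else 1) *
        (eE * Cg eE eN eSE eNW α β n (i-1) j + eN * Cg eE eN eSE eNW α β n i (j-1) +
         eSE * Cg eE eN eSE eNW α β n (i-1) (j+1) + eNW * Cg eE eN eSE eNW α β n (i+1) (j-1))
    else 0 := rfl

lemma Cg_neg {i j : ℤ} (h : i < 0 ∨ j < 0) (n : ℕ) : Cg eE eN eSE eNW α β n i j = 0 := by
  cases n with
  | zero => rw [Cg_zero]; rw [if_neg]; rintro ⟨h1, h2⟩; omega
  | succ n => rw [Cg_succ]; rw [if_neg]; rintro ⟨h1, h2⟩; omega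

lemma Cg_swap (n : ℕ) (i j : ℤ) :
    Cg eE eN eSE eNW α β n i j = Cg eN eE eNW eSE β α n j i := by
  induction n generalizing i j with
  | zero =>
    rw [Cg_zero, Cg_zero]
    by_cases hi : i = 0 <;> by_cases hj : j = 0 <;> simp [hi, hj]
  | succ n ih =>
    rw [Cg_succ, Cg_succ]
    by_cases h : 0 ≤ i ∧ 0 ≤ j
    · have h' : 0 ≤ j ∧ 0 ≤ i := ⟨h.2, h.1⟩
      rw [if_pos h, if_pos h', ih (i-1) j, ih i (j-1), ih (i-1) (j+1), ih (i+1) (j-1)]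
      ring
    · rw [if_neg h, if_neg (fun hh => h ⟨hh.2, hh.1⟩)]

lemma Cg_support {n : ℕ} {i j : ℤ} (h : (n:ℤ) < i + j) : Cg eE eN eSE eNW α β n i j = 0 := by
  induction n generalizing i j with
  | zero => rw [Cg_zero, if_neg]; rintro ⟨h1, h2⟩; omega
  | succ n ih =>
    rw [Cg_succ]
    rcases le_or_gt 0 i with hi | hi
    · rcases le_or_gt 0 j with hj | hj
      · rw [if_pos ⟨hi, hj⟩, ih (by push_cast; omega), ih (by push_cast; omega),
          ih (by push_cast; omega), ih (by push_cast; omega)]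
        ring
      · rw [if_neg]; rintro ⟨_, _⟩; omega
    · rw [if_neg]; rintro ⟨_, _⟩; omega

lemma Cg_origin (n : ℕ) : Cg eE eN eSE eNW α β (n+1) 0 0 = 0 := by
  rw [Cg_succ]
  rw [Cg_neg (by norm_num) n, Cg_neg (by norm_num) n, Cg_neg (by norm_num) n,
    Cg_neg (by norm_num) n]
  simp

/-- The key reflection identity, using `α + β = α * β`. -/
lemma Cg_star (hab : α + β = α * β) :
    ∀ (n : ℕ) (i j : ℤ), 0 ≤ i → 1 ≤ j →
      Cg eE eN eSE eNW α β (n+1) i j =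
        β * (eNW * Cg eE eN eSE eNW α β n (i+1) (j-1) +
             eN * Cg eE eN eSE eNW α β n i (j-1)) := by
  intro n
  induction n with
  | zero =>
    intro i j hi hj
    rw [Cg_succ, if_pos (show (0:ℤ) ≤ i ∧ (0:ℤ) ≤ j from ⟨hi, by omega⟩),
      if_neg (show ¬ j = 0 by omega)]
    simp only [Cg_zero]
    by_cases hij : i = 0 ∧ j - 1 = 0
    · obtain ⟨h1, h2⟩ := hij
      subst h1
      have hj1 : j = 1 := by omega
      subst hj1
      norm_num
    · have h1 : ¬(i - 1 = 0 ∧ j = 0) := by omega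
      have h3 : ¬(i - 1 = 0 ∧ j + 1 = 0) := by omega
      have h4 : ¬(i + 1 = 0 ∧ j - 1 = 0) := by omega
      simp [h1, hij, h3, h4]
  | succ n ih =>
    intro i j hi hj
    rcases eq_or_lt_of_le hi with hi0 | hi1
    · -- i = 0
      rw [Cg_succ, if_pos (show (0:ℤ) ≤ i ∧ (0:ℤ) ≤ j from ⟨hi, by omega⟩),
        if_neg (show ¬ j = 0 by omega), if_pos (show i = 0 from hi0.symm)]
      rw [Cg_neg (show i - 1 < 0 ∨ j < 0 from by omega) (n+1),
        Cg_neg (show i - 1 < 0 ∨ j + 1 < 0 from by omega) (n+1)]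
      ring
    · -- 1 ≤ i
      have hi' : (1:ℤ) ≤ i := hi1
      rw [Cg_succ, if_pos (show (0:ℤ) ≤ i ∧ (0:ℤ) ≤ j from ⟨hi, by omega⟩),
        if_neg (show ¬ j = 0 by omega), if_neg (show ¬ i = 0 by omega)]
      rcases eq_or_lt_of_le hj with hj1 | hj2
      · -- j = 1
        have hj1 : j = 1 := hj1.symm
        subst hj1
        have e3 : Cg eE eN eSE eNW α β (n+1) i 0 =
            α * (eE * Cg eE eN eSE eNW α β n (i-1) 0 + eSE * Cg eE eN eSE eNW α β n (i-1) 1) := by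
          rw [Cg_succ, if_pos (show (0:ℤ) ≤ i ∧ (0:ℤ) ≤ 0 from ⟨hi, le_rfl⟩),
            if_pos (show (0:ℤ) = 0 from rfl), if_neg (show ¬ i = 0 by omega)]
          rw [Cg_neg (show i < 0 ∨ (0:ℤ) - 1 < 0 from by omega) n,
            Cg_neg (show i + 1 < 0 ∨ (0:ℤ) - 1 < 0 from by omega) n]
          norm_num
        have e4 : Cg eE eN eSE eNW α β (n+1) (i+1) 0 =
            α * (eE * Cg eE eN eSE eNW α β n i 0 + eSE * Cg eE eN eSE eNW α β n i 1) := by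
          rw [Cg_succ, if_pos (show (0:ℤ) ≤ i + 1 ∧ (0:ℤ) ≤ 0 from ⟨by omega, le_rfl⟩),
            if_pos (show (0:ℤ) = 0 from rfl), if_neg (show ¬ i + 1 = 0 by omega)]
          rw [Cg_neg (show i + 1 < 0 ∨ (0:ℤ) - 1 < 0 from by omega) n,
            Cg_neg (show i + 1 + 1 < 0 ∨ (0:ℤ) - 1 < 0 from by omega) n]
          have h5 : (i:ℤ) + 1 - 1 = i := by ring
          rw [h5]
          norm_num
        have e1 : Cg eE eN eSE eNW α β (n+1) (i-1) 1 =
            β * (eNW * Cg eE eN eSE eNW α β n i 0 + eN * Cg eE eN eSE eNW α β n (i-1) 0) := by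
          have h := ih (i-1) 1 (by omega) le_rfl
          have h5 : (i:ℤ) - 1 + 1 = i := by ring
          have h6 : (1:ℤ) - 1 = 0 := by norm_num
          rw [h5, h6] at h
          exact h
        have e2 : Cg eE eN eSE eNW α β (n+1) (i-1) 2 =
            β * (eNW * Cg eE eN eSE eNW α β n i 1 + eN * Cg eE eN eSE eNW α β n (i-1) 1) := by
          have h := ih (i-1) 2 (by omega) (by norm_num)
          have h5 : (i:ℤ) - 1 + 1 = i := by ring
          have h6 : (2:ℤ) - 1 = 1 := by norm_num
          rw [h5, h6] at h
          exact h
        have h6 : (1:ℤ) - 1 = 0 := by norm_num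
        have h7 : (1:ℤ) + 1 = 2 := by norm_num
        rw [h6, h7, e1, e2, e3, e4]
        linear_combination (eE * eNW * Cg eE eN eSE eNW α β n i 0 +
          eE * eN * Cg eE eN eSE eNW α β n (i-1) 0 +
          eSE * eNW * Cg eE eN eSE eNW α β n i 1 +
          eSE * eN * Cg eE eN eSE eNW α β n (i-1) 1) * hab
      · -- 2 ≤ j
        have hj' : (2:ℤ) ≤ j := hj2
        have e1 := ih (i-1) j (by omega) (by omega)
        have e2 := ih i (j-1) hi (by omega)
        have e3 := ih (i-1) (j+1) (by omega) (by omega)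
        have e4 := ih (i+1) (j-1) (by omega) (by omega)
        have g1 : (i:ℤ) - 1 + 1 = i := by ring
        have g2 : (j:ℤ) + 1 - 1 = j := by ring
        have g3 : (i:ℤ) + 1 + 1 = i + 2 := by ring
        have g4 : (j:ℤ) - 1 - 1 = j - 2 := by ring
        have g5 : (j:ℤ) - 1 + 1 = j := by ring
        rw [g1] at e1 e3
        rw [g2] at e3
        rw [g3, g4] at e4
        rw [g4] at e2
        have f1 : Cg eE eN eSE eNW α β (n+1) (i+1) (j-1) =
            (eE * Cg eE eN eSE eNW α β n i (j-1) + eN * Cg eE eN eSE eNW α β n (i+1) (j-2) +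
             eSE * Cg eE eN eSE eNW α β n i j +
             eNW * Cg eE eN eSE eNW α β n (i+2) (j-2)) := by
          rw [Cg_succ, if_pos (show (0:ℤ) ≤ i + 1 ∧ (0:ℤ) ≤ j - 1 from ⟨by omega, by omega⟩),
            if_neg (show ¬ j - 1 = 0 by omega), if_neg (show ¬ i + 1 = 0 by omega)]
          have h5 : (i:ℤ) + 1 - 1 = i := by ring
          rw [h5, g3, g4, g5]
          ring
        have f2 : Cg eE eN eSE eNW α β (n+1) i (j-1) =
            (eE * Cg eE eN eSE eNW α β n (i-1) (j-1) + eN * Cg eE eN eSE eNW α β n i (j-2) +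
             eSE * Cg eE eN eSE eNW α β n (i-1) j +
             eNW * Cg eE eN eSE eNW α β n (i+1) (j-2)) := by
          rw [Cg_succ, if_pos (show (0:ℤ) ≤ i ∧ (0:ℤ) ≤ j - 1 from ⟨by omega, by omega⟩),
            if_neg (show ¬ j - 1 = 0 by omega), if_neg (show ¬ i = 0 by omega)]
          rw [g4, g5]
          ring
        conv_lhs => rw [e1, e2, e3, e4]
        conv_rhs => rw [f1, f2]
        ring

lemma Cg_row0 (hab : α + β = α * β) (n : ℕ) (i : ℤ) (hi : 0 ≤ i) :
    Cg eE eN eSE eNW α β (n+2) i 0 =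
      α * eE * Cg eE eN eSE eNW α β (n+1) (i-1) 0 +
      α * β * eSE * eNW * Cg eE eN eSE eNW α β n i 0 +
      α * β * eSE * eN * Cg eE eN eSE eNW α β n (i-1) 0 -
      (if n = 0 ∧ i = 0 then α * β * eSE * eNW else 0) := by
  rcases eq_or_lt_of_le hi with hi0 | hi1
  · -- i = 0
    have hi0 : i = 0 := hi0.symm
    subst hi0
    rw [Cg_origin (n+1)]
    rw [Cg_neg (show (0:ℤ) - 1 < 0 ∨ (0:ℤ) < 0 from by omega) (n+1),
      Cg_neg (show (0:ℤ) - 1 < 0 ∨ (0:ℤ) < 0 from by omega) n]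
    cases n with
    | zero => rw [Cg_zero]; norm_num
    | succ m => rw [Cg_origin m]; norm_num
  · -- 1 ≤ i
    have hi' : (1:ℤ) ≤ i := hi1
    have hstep : Cg eE eN eSE eNW α β (n+2) i 0 =
        α * (eE * Cg eE eN eSE eNW α β (n+1) (i-1) 0 +
             eSE * Cg eE eN eSE eNW α β (n+1) (i-1) 1) := by
      rw [Cg_succ, if_pos (show (0:ℤ) ≤ i ∧ (0:ℤ) ≤ 0 from ⟨hi, le_rfl⟩),
        if_pos (show (0:ℤ) = 0 from rfl), if_neg (show ¬ i = 0 by omega)]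
      rw [Cg_neg (show i < 0 ∨ (0:ℤ) - 1 < 0 from by omega) (n+1),
        Cg_neg (show i + 1 < 0 ∨ (0:ℤ) - 1 < 0 from by omega) (n+1)]
      ring
    have hstar := Cg_star (eE := eE) (eN := eN) (eSE := eSE) (eNW := eNW) hab n (i-1) 1 (by omega) le_rfl
    have g1 : (i:ℤ) - 1 + 1 = i := by ring
    have g2 : (1:ℤ) - 1 = 0 := by norm_num
    rw [g1, g2] at hstar
    rw [hstep, hstar, if_neg (show ¬ (n = 0 ∧ i = 0) from by omega)]
    ring

/-- Row-0 generating polynomial. -/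
def Fp (eE eN eSE eNW α β : ℝ) (n : ℕ) : Polynomial ℝ :=
  ∑ i ∈ Finset.range (n+1),
    Polynomial.C (Cg eE eN eSE eNW α β n (i:ℤ) 0) * Polynomial.X ^ i

lemma Fp_zero : Fp eE eN eSE eNW α β 0 = 1 := by
  rw [Fp]
  rw [Finset.sum_range_one]
  rw [Cg_zero]
  norm_num

lemma Cg_one_one : Cg eE eN eSE eNW α β 1 1 0 = α * eE := by
  rw [Cg_succ, if_pos (show (0:ℤ) ≤ 1 ∧ (0:ℤ) ≤ 0 from by norm_num),
    if_pos (show (0:ℤ) = 0 from rfl), if_neg (show ¬ (1:ℤ) = 0 by norm_num)]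
  rw [Cg_zero, Cg_zero, Cg_zero, Cg_zero]
  norm_num

lemma Fp_one : Fp eE eN eSE eNW α β 1 = Polynomial.C (α * eE) * Polynomial.X := by
  rw [Fp]
  rw [Finset.sum_range_succ, Finset.sum_range_one]
  have h1 : Cg eE eN eSE eNW α β 1 ((0:ℕ):ℤ) 0 = 0 := Cg_origin 0
  have h2 : Cg eE eN eSE eNW α β 1 ((1:ℕ):ℤ) 0 = α * eE := Cg_one_one
  rw [h1, h2]
  norm_num

lemma Fp_rec (hab : α + β = α * β) (n : ℕ) :
    Fp eE eN eSE eNW α β (n+2) =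
      Polynomial.C (α * eE) * Polynomial.X * Fp eE eN eSE eNW α β (n+1) +
      Polynomial.C (α * β * eSE * eNW) * Fp eE eN eSE eNW α β n +
      Polynomial.C (α * β * eSE * eN) * Polynomial.X * Fp eE eN eSE eNW α β n -
      (if n = 0 then Polynomial.C (α * β * eSE * eNW) else 0) := by
  have key : ∀ i ∈ Finset.range (n+3),
      Polynomial.C (Cg eE eN eSE eNW α β (n+2) (i:ℤ) 0) * Polynomial.X ^ i =
        (Polynomial.C (α * eE * Cg eE eN eSE eNW α β (n+1) ((i:ℤ)-1) 0) * Polynomial.X ^ i +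
         Polynomial.C (α * β * eSE * eNW * Cg eE eN eSE eNW α β n (i:ℤ) 0) * Polynomial.X ^ i +
         Polynomial.C (α * β * eSE * eN * Cg eE eN eSE eNW α β n ((i:ℤ)-1) 0) * Polynomial.X ^ i)
        - Polynomial.C (if n = 0 ∧ (i:ℤ) = 0 then α * β * eSE * eNW else 0) * Polynomial.X ^ i := by
    intro i _
    rw [Cg_row0 hab n (i:ℤ) (by positivity)]
    rw [map_sub, map_add, map_add]
    ring
  rw [show Fp eE eN eSE eNW α β (n+2) =
      ∑ i ∈ Finset.range (n+3),
        Polynomial.C (Cg eE eN eSE eNW α β (n+2) (i:ℤ) 0) * Polynomial.X ^ i from rfl]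
  rw [Finset.sum_congr rfl key, Finset.sum_sub_distrib, Finset.sum_add_distrib,
    Finset.sum_add_distrib]
  congr 1
  · congr 1
    · congr 1
      · -- S1 : shifted sum = C (α eE) * X * Fp (n+1)
        rw [Finset.sum_range_succ' _ (n+2)]
        have h0 : Polynomial.C (α * eE * Cg eE eN eSE eNW α β (n+1) (((0:ℕ):ℤ)-1) 0) *
            Polynomial.X ^ (0:ℕ) = 0 := by
          rw [Cg_neg (show ((0:ℕ):ℤ) - 1 < 0 ∨ (0:ℤ) < 0 from by norm_num) (n+1)]
          norm_num
        rw [h0, add_zero]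
        rw [Fp, Finset.mul_sum]
        apply Finset.sum_congr rfl
        intro i _
        have hc : ((i:ℕ)+1 : ℤ) - 1 = (i:ℤ) := by push_cast; ring
        rw [show (((i+1:ℕ)):ℤ) = ((i:ℕ):ℤ) + 1 from by push_cast; ring, hc]
        rw [map_mul, pow_succ]
        ring
      · -- S2 : = C c * Fp n
        rw [Finset.sum_range_succ, Finset.sum_range_succ]
        rw [Cg_support (show (n:ℤ) < ((n+2:ℕ):ℤ) + 0 from by push_cast; omega),
          Cg_support (show (n:ℤ) < ((n+1:ℕ):ℤ) + 0 from by push_cast; omega)]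
        rw [Fp, Finset.mul_sum]
        simp only [map_mul, map_zero, mul_zero, zero_mul, add_zero]
        apply Finset.sum_congr rfl
        intro i _
        ring
    · -- S3 : = C c' * X * Fp n
      rw [Finset.sum_range_succ' _ (n+2)]
      have h0 : Polynomial.C (α * β * eSE * eN * Cg eE eN eSE eNW α β n (((0:ℕ):ℤ)-1) 0) *
          Polynomial.X ^ (0:ℕ) = 0 := by
        rw [Cg_neg (show ((0:ℕ):ℤ) - 1 < 0 ∨ (0:ℤ) < 0 from by norm_num) n]
        norm_num
      rw [h0, add_zero]
      rw [Finset.sum_range_succ]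
      rw [show (((n+1:ℕ)+1:ℕ):ℤ) - 1 = ((n+1:ℕ):ℤ) from by push_cast; ring]
      rw [Cg_support (show (n:ℤ) < ((n+1:ℕ):ℤ) + 0 from by push_cast; omega)]
      rw [Fp, Finset.mul_sum]
      simp only [map_mul, map_zero, mul_zero, zero_mul, add_zero]
      apply Finset.sum_congr rfl
      intro i _
      have hc : ((i:ℕ)+1 : ℤ) - 1 = (i:ℤ) := by push_cast; ring
      rw [show (((i+1:ℕ)):ℤ) = ((i:ℕ):ℤ) + 1 from by push_cast; ring, hc]
      rw [pow_succ]
      ring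
  · -- S4 : the correction sum
    by_cases hn : n = 0
    · subst hn
      rw [if_pos rfl]
      rw [show (0+3 : ℕ) = 3 from rfl]
      rw [Finset.sum_range_succ, Finset.sum_range_succ, Finset.sum_range_one]
      rw [if_pos (show (0:ℕ) = 0 ∧ ((0:ℕ):ℤ) = 0 from by norm_num),
        if_neg (show ¬ ((0:ℕ) = 0 ∧ ((1:ℕ):ℤ) = 0) from by norm_num),
        if_neg (show ¬ ((0:ℕ) = 0 ∧ ((2:ℕ):ℤ) = 0) from by norm_num)]
      norm_num
    · rw [if_neg hn]
      apply Finset.sum_eq_zero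
      intro i _
      rw [if_neg (show ¬ (n = 0 ∧ (i:ℤ) = 0) from fun h => hn h.1)]
      norm_num


lemma series_identity (hab : α + β = α * β) (G : PowerSeries (Polynomial ℝ))
    (hG : ∀ n, PowerSeries.coeff n G = Fp eE eN eSE eNW α β n) :
    (1 - CC (α*β*eSE*eNW) * T^2 - (CC (α*eE) * T + CC (α*β*eSE*eN) * T^2) * XX) * G
      = 1 - CC (α*β*eSE*eNW) * T^2 := by
  have L : (1 - CC (α*β*eSE*eNW) * T^2 - (CC (α*eE) * T + CC (α*β*eSE*eN) * T^2) * XX) * G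
      = G - CC (α*β*eSE*eNW) * (G * T^2) - (CC (α*eE) * XX) * (G * T^1)
          - (CC (α*β*eSE*eN) * XX) * (G * T^2) := by
    ring
  rw [L, show CC (α*eE) * XX = PowerSeries.C (Polynomial.C (α*eE) * Polynomial.X)
      from (map_mul _ _ _).symm,
    show CC (α*β*eSE*eN) * XX
        = PowerSeries.C (Polynomial.C (α*β*eSE*eN) * Polynomial.X)
      from (map_mul _ _ _).symm]
  apply PowerSeries.ext
  intro n
  simp only [map_sub, PowerSeries.coeff_C_mul, PowerSeries.coeff_mul_X_pow', hG,
    PowerSeries.coeff_one, PowerSeries.coeff_X_pow, PowerSeries.coeff_C]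
  match n with
  | 0 =>
    norm_num [Fp_zero]
  | 1 =>
    norm_num [Fp_one, Fp_zero]
  | (m+2) =>
    have h2 : 2 ≤ m + 2 := by omega
    have h1 : 1 ≤ m + 2 := by omega
    rw [if_pos h2, if_pos h1, if_pos h2]
    have e1 : m + 2 - 2 = m := by omega
    have e2 : m + 2 - 1 = m + 1 := by omega
    rw [e1, e2]
    rw [Fp_rec hab m]
    by_cases hm : m = 0
    · subst hm
      norm_num
      ring
    · rw [if_neg hm, if_neg (show ¬ m + 2 = 0 by omega)]
      ring


-- ### basic walk lemmas

lemma mem_quadWalks {S : Finset (ℤ × ℤ)} {n : ℕ} {v : Fin n → ℤ × ℤ} :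
    v ∈ quadWalks S n ↔ (∀ i, v i ∈ S) ∧ ∀ i, 0 ≤ (psum v i).1 ∧ 0 ≤ (psum v i).2 := by
  simp [quadWalks, Fintype.mem_piFinset]

lemma psum_castSucc {n : ℕ} (v : Fin (n+1) → ℤ × ℤ) (i : Fin n) :
    psum v i.castSucc = psum (v ∘ Fin.castSucc) i := by
  unfold psum
  rw [Finset.sum_filter, Finset.sum_filter, Fin.sum_univ_castSucc]
  rw [if_neg (show ¬ Fin.last n ≤ i.castSucc from (Fin.castSucc_lt_last i).not_ge)]
  rw [add_zero]
  apply Finset.sum_congr rfl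
  intro j _
  simp [Fin.castSucc_le_castSucc_iff]

lemma psum_last {n : ℕ} (v : Fin (n+1) → ℤ × ℤ) : psum v (Fin.last n) = endpt v := by
  unfold psum endpt
  rw [Finset.filter_true_of_mem]
  intro j _
  exact Fin.le_last j

lemma snoc_comp_castSucc {n : ℕ} (w : Fin n → ℤ × ℤ) (s : ℤ × ℤ) :
    (Fin.snoc w s : Fin (n+1) → ℤ × ℤ) ∘ Fin.castSucc = w := by
  funext i
  simp

lemma endpt_snoc {n : ℕ} (w : Fin n → ℤ × ℤ) (s : ℤ × ℤ) :
    endpt (Fin.snoc w s : Fin (n+1) → ℤ × ℤ) = endpt w + s := by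
  unfold endpt
  rw [Fin.sum_univ_castSucc]
  simp

lemma psum_snoc_castSucc {n : ℕ} (w : Fin n → ℤ × ℤ) (s : ℤ × ℤ) (i : Fin n) :
    psum (Fin.snoc w s : Fin (n+1) → ℤ × ℤ) i.castSucc = psum w i := by
  rw [psum_castSucc, snoc_comp_castSucc]

lemma mem_quadWalks_succ {S : Finset (ℤ × ℤ)} {n : ℕ} {v : Fin (n+1) → ℤ × ℤ} :
    v ∈ quadWalks S (n+1) ↔
      (v ∘ Fin.castSucc) ∈ quadWalks S n ∧ v (Fin.last n) ∈ S ∧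
        0 ≤ (endpt v).1 ∧ 0 ≤ (endpt v).2 := by
  rw [mem_quadWalks, mem_quadWalks]
  constructor
  · rintro ⟨hs, hq⟩
    refine ⟨⟨fun i => hs _, fun i => ?_⟩, hs _, ?_⟩
    · rw [← psum_castSucc]; exact hq _
    · rw [← psum_last]; exact hq _
  · rintro ⟨⟨hs, hq⟩, hlast, hend⟩
    constructor
    · intro i
      refine Fin.lastCases ?_ ?_ i
      · exact hlast
      · intro j; exact hs j
    · intro i
      refine Fin.lastCases ?_ ?_ i
      · rw [psum_last]; exact hend
      · intro j; rw [psum_castSucc]; exact hq j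

lemma wt_snoc {n : ℕ} (d : ℤ × ℤ → ℝ) (a b : ℝ) (w : Fin n → ℤ × ℤ) (s : ℤ × ℤ) :
    wt d a b (Fin.snoc w s : Fin (n+1) → ℤ × ℤ) =
      wt d a b w * (d s * (if (endpt w + s).2 = 0 then a else 1) *
        (if (endpt w + s).1 = 0 then b else 1)) := by
  unfold wt
  rw [Finset.card_filter, Finset.card_filter, Finset.card_filter, Finset.card_filter,
    Fin.prod_univ_castSucc, Fin.sum_univ_castSucc, Fin.sum_univ_castSucc (f := fun i =>
      if (psum (Fin.snoc w s : Fin (n+1) → ℤ × ℤ) i).1 = 0 then 1 else 0)]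
  simp only [psum_snoc_castSucc, psum_last, endpt_snoc, Fin.snoc_castSucc, Fin.snoc_last]
  rw [pow_add, pow_add]
  have ha : a ^ (if (endpt w + s).2 = 0 then 1 else 0) = (if (endpt w + s).2 = 0 then a else 1) := by
    by_cases h : (endpt w + s).2 = 0 <;> simp [h]
  have hb : b ^ (if (endpt w + s).1 = 0 then 1 else 0) = (if (endpt w + s).1 = 0 then b else 1) := by
    by_cases h : (endpt w + s).1 = 0 <;> simp [h]
  rw [ha, hb]
  ring

-- ### the walk-sum W and its recurrence

def W (S : Finset (ℤ × ℤ)) (d : ℤ × ℤ → ℝ) (a b : ℝ) (n : ℕ) (p : ℤ × ℤ) : ℝ :=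
  ∑ v ∈ (quadWalks S n).filter (fun v => endpt v = p), wt d a b v

lemma endpt_nonneg {S : Finset (ℤ × ℤ)} {n : ℕ} {v : Fin n → ℤ × ℤ}
    (hv : v ∈ quadWalks S n) : 0 ≤ (endpt v).1 ∧ 0 ≤ (endpt v).2 := by
  cases n with
  | zero =>
    have : endpt v = 0 := by simp [endpt]
    rw [this]; exact ⟨le_refl 0, le_refl 0⟩
  | succ m =>
    rw [← psum_last]
    exact (mem_quadWalks.mp hv).2 _

lemma W_zero (S : Finset (ℤ × ℤ)) (d : ℤ × ℤ → ℝ) (a b : ℝ) (p : ℤ × ℤ) :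
    W S d a b 0 p = if p = 0 then 1 else 0 := by
  have hq : quadWalks S 0 = {(fun i => i.elim0 : Fin 0 → ℤ × ℤ)} := by
    apply Finset.eq_singleton_iff_unique_mem.mpr
    constructor
    · rw [mem_quadWalks]
      exact ⟨fun i => i.elim0, fun i => i.elim0⟩
    · intro v _
      funext i
      exact i.elim0
  have hend : endpt (fun i => i.elim0 : Fin 0 → ℤ × ℤ) = 0 := by simp [endpt]
  have hwt : wt d a b (fun i => i.elim0 : Fin 0 → ℤ × ℤ) = 1 := by
    unfold wt
    simp
  rw [W, hq, Finset.filter_singleton]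
  by_cases hp : p = 0
  · rw [if_pos (by rw [hend, hp]), Finset.sum_singleton, hwt, if_pos hp]
  · rw [if_neg (by rw [hend]; exact fun h => hp h.symm), if_neg hp, Finset.sum_empty]

lemma W_succ (S : Finset (ℤ × ℤ)) (d : ℤ × ℤ → ℝ) (a b : ℝ) (n : ℕ) (p : ℤ × ℤ) :
    W S d a b (n+1) p =
      if 0 ≤ p.1 ∧ 0 ≤ p.2 then
        (if p.2 = 0 then a else 1) * (if p.1 = 0 then b else 1) *
          ∑ s ∈ S, d s * W S d a b n (p - s)
      else 0 := by
  by_cases hp : 0 ≤ p.1 ∧ 0 ≤ p.2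
  · rw [if_pos hp]
    have step1 : W S d a b (n+1) p =
        ∑ q ∈ (S ×ˢ quadWalks S n).filter (fun q => endpt q.2 = p - q.1),
          wt d a b (Fin.snoc q.2 q.1 : Fin (n+1) → ℤ × ℤ) := by
      rw [W]
      apply Finset.sum_bij' (i := fun v _ => ((v (Fin.last n), v ∘ Fin.castSucc) : (ℤ×ℤ) × (Fin n → ℤ×ℤ)))
        (j := fun q _ => (Fin.snoc q.2 q.1 : Fin (n+1) → ℤ × ℤ))
      · intro v hv
        rw [Finset.mem_filter] at hv ⊢
        obtain ⟨hv1, hv2⟩ := hv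
        rw [mem_quadWalks_succ] at hv1
        refine ⟨Finset.mem_product.mpr ⟨hv1.2.1, hv1.1⟩, ?_⟩
        have he : endpt v = endpt (v ∘ Fin.castSucc) + v (Fin.last n) := by
          unfold endpt
          rw [Fin.sum_univ_castSucc]
          rfl
        simp only
        rw [← hv2, he]
        ring
      · intro q hq
        rw [Finset.mem_filter] at hq ⊢
        obtain ⟨hq1, hq2⟩ := hq
        rw [Finset.mem_product] at hq1
        constructor
        · rw [mem_quadWalks_succ, snoc_comp_castSucc, Fin.snoc_last, endpt_snoc, hq2]
          refine ⟨hq1.2, hq1.1, ?_, ?_⟩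
          · simpa using hp.1
          · simpa using hp.2
        · rw [endpt_snoc, hq2]; ring
      · intro v hv
        funext i
        refine Fin.lastCases ?_ ?_ i
        · simp
        · intro j; simp
      · intro q hq
        simp [snoc_comp_castSucc]
      · intro v hv
        rw [Finset.mem_filter] at hv
        congr 1
        funext i
        refine Fin.lastCases ?_ ?_ i
        · simp
        · intro j; simp
    rw [step1, Finset.sum_filter, Finset.sum_product]
    rw [Finset.mul_sum]
    apply Finset.sum_congr rfl
    intro s hs
    have inner : ∀ w ∈ quadWalks S n,
        (if endpt w = p - s then wt d a b (Fin.snoc w s : Fin (n+1) → ℤ × ℤ) else 0) =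
        (if endpt w = p - s then
          wt d a b w * (d s * (if p.2 = 0 then a else 1) * (if p.1 = 0 then b else 1))
         else 0) := by
      intro w _
      by_cases hw : endpt w = p - s
      · rw [if_pos hw, if_pos hw, wt_snoc]
        rw [show endpt w + s = p from by rw [hw]; ring]
      · rw [if_neg hw, if_neg hw]
    rw [Finset.sum_congr rfl inner, ← Finset.sum_filter, ← Finset.sum_mul, W]
    ring
  · rw [if_neg hp]
    apply Finset.sum_eq_zero
    intro v hv
    rw [Finset.mem_filter] at hv
    exfalso
    apply hp
    rw [← hv.2]
    exact endpt_nonneg hv.1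


-- ### identification of W with the abstract recurrence

lemma W_eq (S : Finset (ℤ × ℤ)) (d : ℤ × ℤ → ℝ) (a b : ℝ)
    (h1 : 0 < d (1, -1)) (h2 : 0 < d (-1, 1)) (h3 : 0 < d (0, 1)) (h4 : 0 ≤ d (1, 0))
    (hS : S = ({(1, -1), (-1, 1), (1, 0), (0, 1)} : Finset (ℤ × ℤ)).filter fun v => 0 < d v)
    (n : ℕ) (p : ℤ × ℤ) :
    W S d a b n p = Cg (d (1,0)) (d (0,1)) (d (1,-1)) (d (-1,1)) a b n p.1 p.2 := by
  induction n generalizing p with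
  | zero =>
    rw [W_zero, Cg_zero]
    simp [Prod.ext_iff]
  | succ n ih =>
    rw [W_succ, Cg_succ]
    by_cases hq : 0 ≤ p.1 ∧ 0 ≤ p.2
    · rw [if_pos hq, if_pos hq]
      congr 1
      have hsum : ∀ g : ℤ × ℤ → ℝ, ∑ s ∈ S, d s * g s =
          d (1,-1) * g (1,-1) + d (-1,1) * g (-1,1) + d (1,0) * g (1,0) + d (0,1) * g (0,1) := by
        intro g
        have hite : ∀ s : ℤ × ℤ, 0 ≤ d s →
            ((if 0 < d s then d s * g s else 0) = d s * g s) := by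
          intro s hs
          rcases hs.eq_or_lt with h | h
          · rw [if_neg (by rw [← h]; exact lt_irrefl 0), ← h, zero_mul]
          · rw [if_pos h]
        rw [hS, Finset.sum_filter]
        have e1 : ((1,-1) : ℤ × ℤ) ∉ ({(-1, 1), (1, 0), (0, 1)} : Finset (ℤ × ℤ)) := by decide
        have e2 : ((-1,1) : ℤ × ℤ) ∉ ({(1, 0), (0, 1)} : Finset (ℤ × ℤ)) := by decide
        have e3 : ((1,0) : ℤ × ℤ) ∉ ({(0, 1)} : Finset (ℤ × ℤ)) := by decide
        rw [show ({(1, -1), (-1, 1), (1, 0), (0, 1)} : Finset (ℤ × ℤ)) =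
          insert (1,-1) (insert (-1,1) (insert (1,0) ({(0,1)} : Finset (ℤ × ℤ)))) from rfl]
        rw [Finset.sum_insert e1, Finset.sum_insert e2, Finset.sum_insert e3,
          Finset.sum_singleton]
        rw [hite _ h1.le, hite _ h2.le, hite _ h4, hite _ h3.le]
        ring
      rw [hsum (fun s => W S d a b n (p - s))]
      rw [ih, ih, ih, ih]
      simp only [Prod.fst_sub, Prod.snd_sub]
      norm_num
      ring
    · rw [if_neg hq, if_neg hq]

-- ### endpoint bounds

lemma step_bounds {S : Finset (ℤ × ℤ)} {d : ℤ × ℤ → ℝ}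
    (hS : S = ({(1, -1), (-1, 1), (1, 0), (0, 1)} : Finset (ℤ × ℤ)).filter fun v => 0 < d v)
    {s : ℤ × ℤ} (hs : s ∈ S) : s.1 ≤ 1 ∧ s.2 ≤ 1 := by
  subst hS
  rw [Finset.mem_filter] at hs
  have := hs.1
  simp only [Finset.mem_insert, Finset.mem_singleton] at this
  rcases this with h | h | h | h <;> subst h <;> norm_num

lemma endpt_fst_le {S : Finset (ℤ × ℤ)} {d : ℤ × ℤ → ℝ}
    (hS : S = ({(1, -1), (-1, 1), (1, 0), (0, 1)} : Finset (ℤ × ℤ)).filter fun v => 0 < d v)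
    {n : ℕ} {v : Fin n → ℤ × ℤ} (hv : v ∈ quadWalks S n) :
    (endpt v).1 ≤ n ∧ (endpt v).2 ≤ n := by
  have hsteps := (mem_quadWalks.mp hv).1
  have hfst : (endpt v).1 = ∑ j, (v j).1 := by
    unfold endpt
    exact Prod.fst_sum
  have hsnd : (endpt v).2 = ∑ j, (v j).2 := by
    unfold endpt
    exact Prod.snd_sum
  constructor
  · rw [hfst]
    calc ∑ j, (v j).1 ≤ ∑ _j : Fin n, (1:ℤ) :=
          Finset.sum_le_sum (fun j _ => (step_bounds hS (hsteps j)).1)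
      _ = n := by simp
  · rw [hsnd]
    calc ∑ j, (v j).2 ≤ ∑ _j : Fin n, (1:ℤ) :=
          Finset.sum_le_sum (fun j _ => (step_bounds hS (hsteps j)).2)
      _ = n := by simp

-- ### coefficients of Qx0 and Qy0

lemma Qx0_coeff (S : Finset (ℤ × ℤ)) (d : ℤ × ℤ → ℝ) (a b : ℝ)
    (hS : S = ({(1, -1), (-1, 1), (1, 0), (0, 1)} : Finset (ℤ × ℤ)).filter fun v => 0 < d v)
    (n : ℕ) :
    PowerSeries.coeff n (Qx0 S d a b) =
      ∑ k ∈ Finset.range (n+1), Polynomial.C (W S d a b n ((k:ℤ), 0)) * Polynomial.X ^ k := by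
  rw [Qx0, PowerSeries.coeff_mk]
  have hmaps : ∀ v ∈ (quadWalks S n).filter (fun v => (endpt v).2 = 0),
      (endpt v).1.toNat ∈ Finset.range (n+1) := by
    intro v hv
    rw [Finset.mem_filter] at hv
    have hle := (endpt_fst_le hS hv.1).1
    rw [Finset.mem_range]
    omega
  rw [← Finset.sum_fiberwise_of_maps_to hmaps
    (fun v => Polynomial.C (wt d a b v) * Polynomial.X ^ (endpt v).1.toNat)]
  apply Finset.sum_congr rfl
  intro k _
  have hXk : ∀ v ∈ (Finset.filter (fun v => (endpt v).1.toNat = k)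
      ((quadWalks S n).filter (fun v => (endpt v).2 = 0))),
      Polynomial.C (wt d a b v) * Polynomial.X ^ (endpt v).1.toNat =
        Polynomial.C (wt d a b v) * Polynomial.X ^ k := by
    intro v hv
    rw [(Finset.mem_filter.mp hv).2]
  rw [Finset.sum_congr rfl hXk, ← Finset.sum_mul, ← map_sum]
  congr 2
  rw [Finset.filter_filter, W]
  apply Finset.sum_congr ?_ (fun x _ => rfl)
  apply Finset.filter_congr
  intro v hv
  have h0 := (endpt_nonneg hv).1
  constructor
  · rintro ⟨ha2, ha1⟩
    have hk : (endpt v).1 = ((k:ℤ), (0:ℤ)).1 := by simp only []; omega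
    exact Prod.ext hk ha2
  · intro h
    rw [h]
    refine ⟨rfl, by simp⟩

lemma Qy0_coeff (S : Finset (ℤ × ℤ)) (d : ℤ × ℤ → ℝ) (a b : ℝ)
    (hS : S = ({(1, -1), (-1, 1), (1, 0), (0, 1)} : Finset (ℤ × ℤ)).filter fun v => 0 < d v)
    (n : ℕ) :
    PowerSeries.coeff n (Qy0 S d a b) =
      ∑ k ∈ Finset.range (n+1), Polynomial.C (W S d a b n (0, (k:ℤ))) * Polynomial.X ^ k := by
  rw [Qy0, PowerSeries.coeff_mk]
  have hmaps : ∀ v ∈ (quadWalks S n).filter (fun v => (endpt v).1 = 0),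
      (endpt v).2.toNat ∈ Finset.range (n+1) := by
    intro v hv
    rw [Finset.mem_filter] at hv
    have hle := (endpt_fst_le hS hv.1).2
    rw [Finset.mem_range]
    omega
  rw [← Finset.sum_fiberwise_of_maps_to hmaps
    (fun v => Polynomial.C (wt d a b v) * Polynomial.X ^ (endpt v).2.toNat)]
  apply Finset.sum_congr rfl
  intro k _
  have hXk : ∀ v ∈ (Finset.filter (fun v => (endpt v).2.toNat = k)
      ((quadWalks S n).filter (fun v => (endpt v).1 = 0))),
      Polynomial.C (wt d a b v) * Polynomial.X ^ (endpt v).2.toNat =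
        Polynomial.C (wt d a b v) * Polynomial.X ^ k := by
    intro v hv
    rw [(Finset.mem_filter.mp hv).2]
  rw [Finset.sum_congr rfl hXk, ← Finset.sum_mul, ← map_sum]
  congr 2
  rw [Finset.filter_filter, W]
  apply Finset.sum_congr ?_ (fun x _ => rfl)
  apply Finset.filter_congr
  intro v hv
  have h0 := (endpt_nonneg hv).2
  constructor
  · rintro ⟨ha1, ha2⟩
    have hk : (endpt v).2 = ((0:ℤ), (k:ℤ)).2 := by simp only []; omega
    exact Prod.ext ha1 hk
  · intro h
    rw [h]
    refine ⟨rfl, by simp⟩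

theorem statement0 (d : ℤ × ℤ → ℝ) (a b : ℝ)
    (h1 : 0 < d (1, -1)) (h2 : 0 < d (-1, 1)) (h3 : 0 < d (0, 1)) (h4 : 0 ≤ d (1, 0))
    (ha : 0 < a) (hb : 0 < b) (hab : a + b = a * b)
    (S : Finset (ℤ × ℤ))
    (hS : S = ({(1, -1), (-1, 1), (1, 0), (0, 1)} : Finset (ℤ × ℤ)).filter fun v => 0 < d v) :
    (1 - CC (a * b * d (1, -1) * d (-1, 1)) * T ^ 2
        - (CC (a * d (1, 0)) * T + CC (a * b * d (1, -1) * d (0, 1)) * T ^ 2) * XX)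
        * Qx0 S d a b
      = 1 - CC (a * b * d (1, -1) * d (-1, 1)) * T ^ 2 ∧
    (1 - CC (a * b * d (1, -1) * d (-1, 1)) * T ^ 2
        - (CC (b * d (0, 1)) * T + CC (a * b * d (-1, 1) * d (1, 0)) * T ^ 2) * XX)
        * Qy0 S d a b
      = 1 - CC (a * b * d (1, -1) * d (-1, 1)) * T ^ 2 := by
  have hab2 : b + a = b * a := by linear_combination hab
  constructor
  · -- the Q(x,0) identity
    have hco : ∀ n, PowerSeries.coeff n (Qx0 S d a b) =
        Fp (d (1,0)) (d (0,1)) (d (1,-1)) (d (-1,1)) a b n := by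
      intro n
      rw [Qx0_coeff S d a b hS n, Fp]
      apply Finset.sum_congr rfl
      intro k _
      rw [W_eq S d a b h1 h2 h3 h4 hS n ((k:ℤ), 0)]
    exact series_identity hab (Qx0 S d a b) hco
  · -- the Q(0,y) identity
    have hco : ∀ n, PowerSeries.coeff n (Qy0 S d a b) =
        Fp (d (0,1)) (d (1,0)) (d (-1,1)) (d (1,-1)) b a n := by
      intro n
      rw [Qy0_coeff S d a b hS n, Fp]
      apply Finset.sum_congr rfl
      intro k _
      rw [W_eq S d a b h1 h2 h3 h4 hS n (0, (k:ℤ))]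
      rw [show ((0, (k:ℤ)) : ℤ × ℤ).1 = 0 from rfl, show ((0, (k:ℤ)) : ℤ × ℤ).2 = (k:ℤ) from rfl]
      rw [Cg_swap]
    have hres := series_identity hab2 (Qy0 S d a b) hco
    rw [show b * a * d (-1,1) * d (1,-1) = a * b * d (1,-1) * d (-1,1) from by ring,
      show b * a * d (-1,1) * d (1,0) = a * b * d (-1,1) * d (1,0) from by ring] at hres
    exact hres


end Stmt0
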